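/- Let (V, E, c) be a connected infinite network with conductance function c, and H_E the energy Hilbert space with ‖u‖² = (1/2)Σ_{(xy)∈E} c_{xy}|u(x)-u(y)|². Fix a base point o ∈ V. Then for every x ∈ V there exists a unique dipole v_x ∈ H_E such that f(x) - f(o) = ⟨v_x, f⟩_{H_E} for all f ∈ H_E. -/

import Mathlib

open scoped ComplexConjugate ENNReal NNReal


section Network

variable {V : Type*}

/-- The energy `‖u‖²_{H_E} = (1/2) Σ_{(xy)} c_{xy} |u(x) - u(y)|²` of a function on the
vertices of a network with conductance `c` (valued in `ℝ≥0∞`, so finiteness makes sense). -/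
noncomputable def energy (c : V → V → ℝ) (u : V → ℂ) : ENNReal :=
  (∑' p : V × V, ENNReal.ofReal (c p.1 p.2 * ‖u p.1 - u p.2‖ ^ 2)) / 2

/-- The energy inner product
`⟨u, v⟩_{H_E} = (1/2) Σ_{(xy)} c_{xy} (conj(u x) - conj(u y)) (v x - v y)`. -/
noncomputable def energyInner (c : V → V → ℝ) (u v : V → ℂ) : ℂ :=
  (1 / 2) * ∑' p : V × V,
    (c p.1 p.2 : ℂ) * (starRingEnd ℂ) (u p.1 - u p.2) * (v p.1 - v p.2)

namespace Stmt18

noncomputable def Dm (c : V → V → ℝ) (u : V → ℂ) : V × V → ℂ :=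
  fun p => (Real.sqrt (c p.1 p.2) : ℂ) * (u p.1 - u p.2)

lemma Dm_add (c : V → V → ℝ) (u v : V → ℂ) : Dm c (u + v) = Dm c u + Dm c v := by
  funext p; simp only [Dm, Pi.add_apply]; ring

lemma Dm_smul (c : V → V → ℝ) (a : ℂ) (u : V → ℂ) : Dm c (a • u) = a • Dm c u := by
  funext p; simp only [Dm, Pi.smul_apply, smul_eq_mul]; ring

lemma Dm_zero (c : V → V → ℝ) : Dm c (0 : V → ℂ) = 0 := by
  funext p; simp [Dm]

lemma Dm_sub (c : V → V → ℝ) (u v : V → ℂ) : Dm c (u - v) = Dm c u - Dm c v := by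
  funext p; simp only [Dm, Pi.sub_apply]; ring

variable (c : V → V → ℝ)

lemma norm_Dm_sq (hnonneg : ∀ x y, 0 ≤ c x y) (u : V → ℂ) (p : V × V) :
    ‖Dm c u p‖ ^ 2 = c p.1 p.2 * ‖u p.1 - u p.2‖ ^ 2 := by
  rw [Dm, norm_mul, mul_pow, Complex.norm_real, Real.norm_eq_abs,
    abs_of_nonneg (Real.sqrt_nonneg _), Real.sq_sqrt (hnonneg _ _)]

lemma energy_lt_top_iff (hnonneg : ∀ x y, 0 ≤ c x y) (u : V → ℂ) :
    energy c u < ⊤ ↔ Memℓp (Dm c u) 2 := by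
  have h2 : (0:ℝ) < (2 : ℝ≥0∞).toReal := by norm_num
  rw [memℓp_gen_iff h2]
  set F : V × V → ℝ := fun p => ‖Dm c u p‖ ^ (2 : ℝ≥0∞).toReal with hF
  have hFnonneg : ∀ p, 0 ≤ F p := fun p => by positivity
  have hterm : ∀ p : V × V, c p.1 p.2 * ‖u p.1 - u p.2‖ ^ 2 = F p := by
    intro p
    rw [hF]
    simp only
    rw [← norm_Dm_sq c hnonneg u p, ENNReal.toReal_ofNat, ← Real.rpow_natCast]
    norm_num
  have hdiv : energy c u < ⊤ ↔ (∑' p : V × V, ENNReal.ofReal (F p)) ≠ ⊤ := by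
    rw [energy, tsum_congr (fun p => by rw [hterm p])]
    constructor
    · intro h hc
      rw [hc] at h
      simp [ENNReal.top_div] at h
    · intro h
      exact ENNReal.div_lt_top h (by norm_num)
  rw [hdiv]
  have hco : ∀ p, ENNReal.ofReal (F p) = (((F p).toNNReal : ℝ≥0) : ℝ≥0∞) := fun p => rfl
  rw [tsum_congr hco, ENNReal.tsum_coe_ne_top_iff_summable]
  constructor
  · intro h
    have := NNReal.summable_coe.2 h
    refine this.congr fun p => ?_
    exact Real.coe_toNNReal _ (hFnonneg p)
  · intro h
    rw [← NNReal.summable_coe]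
    refine h.congr fun p => ?_
    exact (Real.coe_toNNReal _ (hFnonneg p)).symm



/-- finite-energy functions -/
noncomputable def M : Submodule ℂ (V → ℂ) where
  carrier := {u | Memℓp (Dm c u) 2}
  add_mem' := fun {u v} hu hv => by
    simpa [Dm_add] using hu.add hv
  zero_mem' := by simpa [Dm_zero] using (zero_memℓp : Memℓp (0 : V × V → ℂ) 2)
  smul_mem' := fun a u hu => by
    simpa [Dm_smul] using hu.const_smul a

lemma mem_M_iff (u : V → ℂ) : u ∈ M c ↔ Memℓp (Dm c u) 2 := Iff.rfl

/-- the isometric "differential" into ℓ². -/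
noncomputable def T : M c →ₗ[ℂ] lp (fun _ : V × V => ℂ) 2 where
  toFun u := ⟨Dm c (u : V → ℂ), u.2⟩
  map_add' u v := by
    ext p
    simp [Dm_add]
    rfl
  map_smul' a u := by
    ext p
    simp [Dm_smul]

lemma T_apply (u : M c) (p : V × V) : (T c u : V × V → ℂ) p = Dm c (u : V → ℂ) p := rfl

/-- along an edge, the increment is controlled by the norm. -/
lemma edge_est (hnonneg : ∀ x y, 0 ≤ c x y) (u : M c) {a b : V} (hab : c a b ≠ 0) :
    ‖(u : V → ℂ) a - (u : V → ℂ) b‖ ≤ (Real.sqrt (c a b))⁻¹ * ‖T c u‖ := by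
  have hpos : 0 < Real.sqrt (c a b) := Real.sqrt_pos.2 ((hnonneg a b).lt_of_ne (Ne.symm hab))
  have h1 : ‖(T c u : V × V → ℂ) (a, b)‖ ≤ ‖T c u‖ :=
    lp.norm_apply_le_norm (by norm_num) (T c u) (a, b)
  have h2 : ‖(T c u : V × V → ℂ) (a, b)‖ = Real.sqrt (c a b) * ‖(u : V → ℂ) a - (u : V → ℂ) b‖ := by
    rw [T_apply, Dm, norm_mul, Complex.norm_real, Real.norm_eq_abs,
      abs_of_nonneg (Real.sqrt_nonneg _)]
  rw [h2] at h1
  rw [mul_comm, ← le_div_iff₀ hpos] at h1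
  simpa [div_eq_mul_inv, mul_comm] using h1


lemma exists_bound (hnonneg : ∀ x y, 0 ≤ c x y)
    (hconn : ∀ x y, ∃ (n : ℕ) (γ : Fin (n + 1) → V), γ 0 = x ∧ γ (Fin.last n) = y ∧
      ∀ i : Fin n, c (γ i.castSucc) (γ i.succ) ≠ 0) (a b : V) :
    ∃ C : ℝ, 0 ≤ C ∧ ∀ u : M c, ‖(u : V → ℂ) b - (u : V → ℂ) a‖ ≤ C * ‖T c u‖ := by
  obtain ⟨n, γ, h0, hl, hc⟩ := hconn a b
  refine ⟨∑ i : Fin n, (Real.sqrt (c (γ i.castSucc) (γ i.succ)))⁻¹, by positivity, fun u => ?_⟩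
  set g : ℕ → ℂ := fun i => if h : i < n + 1 then (u : V → ℂ) (γ ⟨i, h⟩) else 0 with hg
  have tele : ∑ i ∈ Finset.range n, (g (i + 1) - g i) = g n - g 0 := Finset.sum_range_sub g n
  have hgn : g n = (u : V → ℂ) b := by
    rw [hg]; simp only [dif_pos (Nat.lt_succ_self n)]; rw [← hl]; rfl
  have hg0 : g 0 = (u : V → ℂ) a := by
    rw [hg]; simp only [dif_pos (Nat.succ_pos n)]; rw [← h0]; rfl
  have hterm : ∀ i : Fin n, g ((i : ℕ) + 1) - g (i : ℕ)
      = (u : V → ℂ) (γ i.succ) - (u : V → ℂ) (γ i.castSucc) := by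
    intro i
    have h1 : (i : ℕ) + 1 < n + 1 := Nat.succ_lt_succ i.2
    have h2 : (i : ℕ) < n + 1 := Nat.lt_succ_of_lt i.2
    rw [hg]
    simp only [dif_pos h1, dif_pos h2]
    rfl
  calc ‖(u : V → ℂ) b - (u : V → ℂ) a‖ = ‖∑ i ∈ Finset.range n, (g (i + 1) - g i)‖ := by
        rw [tele, hgn, hg0]
    _ = ‖∑ i : Fin n, (g ((i : ℕ) + 1) - g (i : ℕ))‖ := by
        rw [Fin.sum_univ_eq_sum_range (fun k => g (k + 1) - g k)]
    _ ≤ ∑ i : Fin n, ‖(u : V → ℂ) (γ i.succ) - (u : V → ℂ) (γ i.castSucc)‖ := by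
        rw [show (∑ i : Fin n, (g ((i : ℕ) + 1) - g (i : ℕ)))
            = ∑ i : Fin n, ((u : V → ℂ) (γ i.succ) - (u : V → ℂ) (γ i.castSucc)) from
          Finset.sum_congr rfl (fun i _ => hterm i)]
        exact norm_sum_le _ _
    _ ≤ ∑ i : Fin n, (Real.sqrt (c (γ i.castSucc) (γ i.succ)))⁻¹ * ‖T c u‖ := by
        refine Finset.sum_le_sum fun i _ => ?_
        rw [norm_sub_rev]
        exact edge_est c hnonneg u (hc i)
    _ = (∑ i : Fin n, (Real.sqrt (c (γ i.castSucc) (γ i.succ)))⁻¹) * ‖T c u‖ := by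
        rw [Finset.sum_mul]

lemma const_of_Dzero (hnonneg : ∀ x y, 0 ≤ c x y)
    (hconn : ∀ x y, ∃ (n : ℕ) (γ : Fin (n + 1) → V), γ 0 = x ∧ γ (Fin.last n) = y ∧
      ∀ i : Fin n, c (γ i.castSucc) (γ i.succ) ≠ 0)
    (u : V → ℂ) (hu : ∀ p : V × V, Dm c u p = 0) (a b : V) : u a = u b := by
  obtain ⟨n, γ, h0, hl, hc⟩ := hconn a b
  have step : ∀ i : Fin n, u (γ i.castSucc) = u (γ i.succ) := by
    intro i
    have h := hu (γ i.castSucc, γ i.succ)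
    rw [Dm] at h
    rcases mul_eq_zero.1 h with h | h
    · exfalso
      have hs : Real.sqrt (c (γ i.castSucc) (γ i.succ)) = 0 := by exact_mod_cast h
      exact hc i ((Real.sqrt_eq_zero (hnonneg _ _)).1 hs)
    · exact sub_eq_zero.1 h
  have all : ∀ i : Fin (n + 1), u (γ i) = u a := by
    intro i
    induction i using Fin.induction with
    | zero => rw [h0]
    | succ j ih => rw [← step j]; exact ih
  rw [← h0, ← hl, all (Fin.last n), h0]

local notation "⟪" x ", " y "⟫" => @inner ℂ _ _ x y

lemma energyInner_eq (hnonneg : ∀ x y, 0 ≤ c x y) (u f : M c) :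
    energyInner c (u : V → ℂ) (f : V → ℂ) = (1 / 2) * ⟪T c u, T c f⟫ := by
  rw [energyInner, lp.inner_eq_tsum]
  congr 1
  refine tsum_congr fun p => ?_
  rw [RCLike.inner_apply, T_apply, T_apply]
  show (c p.1 p.2 : ℂ) * (starRingEnd ℂ) ((u : V → ℂ) p.1 - (u : V → ℂ) p.2)
      * ((f : V → ℂ) p.1 - (f : V → ℂ) p.2)
    = ((Real.sqrt (c p.1 p.2) : ℂ) * ((f : V → ℂ) p.1 - (f : V → ℂ) p.2))
      * (starRingEnd ℂ) ((Real.sqrt (c p.1 p.2) : ℂ) * ((u : V → ℂ) p.1 - (u : V → ℂ) p.2))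
  rw [map_mul, Complex.conj_ofReal]
  have hsq : ((Real.sqrt (c p.1 p.2) : ℝ) : ℂ) * ((Real.sqrt (c p.1 p.2) : ℝ) : ℂ)
      = (c p.1 p.2 : ℂ) := by
    rw [← Complex.ofReal_mul, Real.mul_self_sqrt (hnonneg _ _)]
  rw [← hsq]
  ring

lemma coord_tendsto {wseq : ℕ → lp (fun _ : V × V => ℂ) 2} {w : lp (fun _ : V × V => ℂ) 2}
    (hlim : Filter.Tendsto wseq Filter.atTop (nhds w)) (p : V × V) :
    Filter.Tendsto (fun n => (wseq n : V × V → ℂ) p) Filter.atTop (nhds ((w : V × V → ℂ) p)) := by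
  rw [tendsto_iff_norm_sub_tendsto_zero] at hlim ⊢
  refine squeeze_zero (fun n => norm_nonneg _) (fun n => ?_) hlim
  have := lp.norm_apply_le_norm (by norm_num : (2 : ℝ≥0∞) ≠ 0) (wseq n - w) p
  simpa using this

set_option synthInstance.maxHeartbeats 1000000 in
lemma isClosed_range (hnonneg : ∀ x y, 0 ≤ c x y)
    (hconn : ∀ x y, ∃ (n : ℕ) (γ : Fin (n + 1) → V), γ 0 = x ∧ γ (Fin.last n) = y ∧
      ∀ i : Fin n, c (γ i.castSucc) (γ i.succ) ≠ 0) (a₀ : V) :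
    IsClosed ((LinearMap.range (T c)) : Set (lp (fun _ : V × V => ℂ) 2)) := by
  apply IsSeqClosed.isClosed
  intro wseq w hw hlim
  have hw' : ∀ n, ∃ u : M c, T c u = wseq n := fun n => hw n
  choose u hu using hw'
  -- the normalized sequences of values converge
  have hcauchy : CauchySeq wseq := hlim.cauchySeq
  have hval : ∀ z : V, ∃ L : ℂ, Filter.Tendsto
      (fun n => (u n : V → ℂ) z - (u n : V → ℂ) a₀) Filter.atTop (nhds L) := by
    intro z
    apply cauchySeq_tendsto_of_complete
    obtain ⟨C, hC0, hC⟩ := exists_bound c hnonneg hconn a₀ z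
    rw [Metric.cauchySeq_iff] at hcauchy ⊢
    intro ε hε
    obtain ⟨N, hN⟩ := hcauchy (ε / (C + 1)) (by positivity)
    refine ⟨N, fun m hm n hn => ?_⟩
    have hd := hN m hm n hn
    have key : dist ((u m : V → ℂ) z - (u m : V → ℂ) a₀)
        ((u n : V → ℂ) z - (u n : V → ℂ) a₀) ≤ C * dist (wseq m) (wseq n) := by
      rw [dist_eq_norm, dist_eq_norm]
      have h1 : ((u m : V → ℂ) z - (u m : V → ℂ) a₀) - ((u n : V → ℂ) z - (u n : V → ℂ) a₀)
          = ((u m - u n : M c) : V → ℂ) z - ((u m - u n : M c) : V → ℂ) a₀ := by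
        simp only [Submodule.coe_sub, Pi.sub_apply]
        ring
      rw [h1]
      have h2 := hC (u m - u n)
      rwa [map_sub, hu, hu] at h2
    calc dist ((u m : V → ℂ) z - (u m : V → ℂ) a₀) ((u n : V → ℂ) z - (u n : V → ℂ) a₀)
        ≤ C * dist (wseq m) (wseq n) := key
      _ ≤ C * (ε / (C + 1)) := by
          exact mul_le_mul_of_nonneg_left hd.le hC0
      _ < ε := by
          rw [mul_div_assoc']
          rw [div_lt_iff₀ (by positivity)]
          nlinarith
  choose G hG using hval
  -- identify w with Dm c G
  have hDG : ∀ p : V × V, Dm c G p = (w : V × V → ℂ) p := by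
    intro p
    have h1 : Filter.Tendsto (fun n => (wseq n : V × V → ℂ) p) Filter.atTop (nhds (Dm c G p)) := by
      have h2 : ∀ n, (wseq n : V × V → ℂ) p
          = (Real.sqrt (c p.1 p.2) : ℂ) * (((u n : V → ℂ) p.1 - (u n : V → ℂ) a₀)
            - ((u n : V → ℂ) p.2 - (u n : V → ℂ) a₀)) := by
        intro n
        rw [← hu n, T_apply, Dm]
        ring_nf
      simp only [h2]
      have h3 : Filter.Tendsto
          (fun n => ((u n : V → ℂ) p.1 - (u n : V → ℂ) a₀) - ((u n : V → ℂ) p.2 - (u n : V → ℂ) a₀))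
          Filter.atTop (nhds (G p.1 - G p.2)) := (hG p.1).sub (hG p.2)
      exact (h3.const_mul _)
    exact tendsto_nhds_unique h1 (coord_tendsto hlim p)
  have hDG' : Dm c G = (w : V × V → ℂ) := funext hDG
  have hmem : G ∈ M c := by
    rw [mem_M_iff, hDG']
    exact lp.memℓp w
  refine ⟨⟨G, hmem⟩, ?_⟩
  apply lp.ext
  exact hDG'

end Stmt18

local notation "⟪" x ", " y "⟫" => @inner ℂ _ _ x y

open Stmt18 in
set_option synthInstance.maxHeartbeats 1000000 in
set_option maxHeartbeats 1000000 in
/-- in a connected network `(V, E, c)` (countably infinite vertex set, finite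
degrees, symmetric positive conductances on edges) with base point `o`, for every `x ∈ V`
there is a dipole `v_x` of finite energy with `f(x) - f(o) = ⟨v_x, f⟩_{H_E}` for all finite
energy `f`, unique as an element of `H_E` (i.e. unique up to an additive constant). -/
theorem stmt18 [Countable V] [Infinite V] (c : V → V → ℝ)
    (hsymm : ∀ x y, c x y = c y x) (hnonneg : ∀ x y, 0 ≤ c x y) (hdiag : ∀ x, c x x = 0)
    (hfin : ∀ x, {y | c x y ≠ 0}.Finite)
    (hconn : ∀ x y, ∃ (n : ℕ) (γ : Fin (n + 1) → V), γ 0 = x ∧ γ (Fin.last n) = y ∧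
      ∀ i : Fin n, c (γ i.castSucc) (γ i.succ) ≠ 0)
    (o x : V) :
    ∃ v : V → ℂ, energy c v < ⊤ ∧
      (∀ f : V → ℂ, energy c f < ⊤ → f x - f o = energyInner c v f) ∧
      ∀ w : V → ℂ,
        (energy c w < ⊤ ∧ ∀ f : V → ℂ, energy c f < ⊤ → f x - f o = energyInner c w f) →
        ∃ k : ℂ, ∀ z, w z = v z + k := by
  classical
  set S := LinearMap.range (T c) with hS
  haveI : CompleteSpace S := (isClosed_range c hnonneg hconn o).completeSpace_coe
  -- the evaluation functional
  let φ : M c →ₗ[ℂ] ℂ :=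
    { toFun := fun u => (u : V → ℂ) x - (u : V → ℂ) o
      map_add' := fun u v => by
        simp only [Submodule.coe_add, Pi.add_apply]; ring
      map_smul' := fun a u => by
        simp only [Submodule.coe_smul, Pi.smul_apply, smul_eq_mul, RingHom.id_apply]; ring }
  have hker : LinearMap.ker (T c) ≤ LinearMap.ker φ := by
    intro u hu
    rw [LinearMap.mem_ker] at hu ⊢
    have hD : ∀ p : V × V, Dm c (u : V → ℂ) p = 0 := by
      intro p
      rw [← T_apply c u p, hu]
      rfl
    show (u : V → ℂ) x - (u : V → ℂ) o = 0
    rw [const_of_Dzero c hnonneg hconn (u : V → ℂ) hD x o, sub_self]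
  let Llin : S →ₗ[ℂ] ℂ :=
    (Submodule.liftQ (LinearMap.ker (T c)) φ hker).comp
      (LinearMap.quotKerEquivRange (T c)).symm.toLinearMap
  have hL : ∀ (u : M c) (h : T c u ∈ S),
      Llin ⟨T c u, h⟩ = (u : V → ℂ) x - (u : V → ℂ) o := by
    intro u h
    have h1 : (LinearMap.quotKerEquivRange (T c)).symm ⟨T c u, h⟩
        = Submodule.Quotient.mk u := by
      rw [LinearEquiv.symm_apply_eq]
      exact Subtype.ext (LinearMap.quotKerEquivRange_apply_mk (T c) u).symm
    show (Submodule.liftQ (LinearMap.ker (T c)) φ hker)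
        ((LinearMap.quotKerEquivRange (T c)).symm ⟨T c u, h⟩) = _
    rw [h1, Submodule.liftQ_apply]
    rfl
  obtain ⟨C, hC0, hC⟩ := exists_bound c hnonneg hconn o x
  have hLb : ∀ s : S, ‖Llin s‖ ≤ C * ‖s‖ := by
    rintro ⟨s, u, rfl⟩
    calc ‖Llin ⟨T c u, ⟨u, rfl⟩⟩‖ = ‖(u : V → ℂ) x - (u : V → ℂ) o‖ := by exact congrArg (‖·‖) (hL u _)
      _ ≤ C * ‖T c u‖ := hC u
      _ = C * ‖(⟨T c u, ⟨u, rfl⟩⟩ : S)‖ := rfl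
  let Lc : S →L[ℂ] ℂ := LinearMap.mkContinuous Llin C hLb
  obtain ⟨vS, hvS⟩ := (InnerProductSpace.toDual ℂ S).surjective Lc
  obtain ⟨g, hg⟩ := vS.2
  -- the key representation property
  have hrep : ∀ f : M c, (⟪T c g, T c f⟫ : ℂ) = (f : V → ℂ) x - (f : V → ℂ) o := by
    intro f
    have h1 := congrArg (fun L : StrongDual ℂ S => L ⟨T c f, ⟨f, rfl⟩⟩) hvS
    rw [InnerProductSpace.toDual_apply_apply] at h1
    have h2 : (⟪vS, (⟨T c f, ⟨f, rfl⟩⟩ : S)⟫ : ℂ) = ⟪T c g, T c f⟫ := by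
      rw [Submodule.coe_inner, hg]
    rw [h2] at h1
    rw [h1]
    show Llin ⟨T c f, _⟩ = _
    exact hL f _
  -- the dipole
  let vM : M c := (2 : ℂ) • g
  have hvfun : (vM : V → ℂ) = fun z => 2 * (g : V → ℂ) z := rfl
  have hprop : ∀ f : V → ℂ, energy c f < ⊤ → f x - f o = energyInner c (vM : V → ℂ) f := by
    intro f hf
    set fM : M c := ⟨f, (Stmt18.energy_lt_top_iff c hnonneg f).1 hf⟩ with hfM
    have h1 : energyInner c (vM : V → ℂ) f = energyInner c (vM : V → ℂ) (fM : V → ℂ) := rfl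
    rw [h1, energyInner_eq c hnonneg vM fM]
    have h2 : T c vM = (2 : ℂ) • T c g := by rw [map_smul]
    rw [h2, inner_smul_left, hrep fM]
    have : (starRingEnd ℂ) 2 = 2 := Complex.conj_ofNat 2
    rw [this]
    show f x - f o = 1 / 2 * (2 * (f x - f o))
    ring
  refine ⟨(vM : V → ℂ), (Stmt18.energy_lt_top_iff c hnonneg _).2 vM.2, hprop, ?_⟩
  rintro w ⟨hwE, hwP⟩
  set wM : M c := ⟨w, (Stmt18.energy_lt_top_iff c hnonneg w).1 hwE⟩ with hwM
  set dM : M c := wM - vM with hdM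
  have hdE : energy c (dM : V → ℂ) < ⊤ := (Stmt18.energy_lt_top_iff c hnonneg _).2 dM.2
  have e1 : (dM : V → ℂ) x - (dM : V → ℂ) o = energyInner c w (dM : V → ℂ) := hwP _ hdE
  have e2 : (dM : V → ℂ) x - (dM : V → ℂ) o = energyInner c (vM : V → ℂ) (dM : V → ℂ) :=
    hprop _ hdE
  have e3 : energyInner c w (dM : V → ℂ) = energyInner c (wM : V → ℂ) (dM : V → ℂ) := rfl
  have hzero : (⟪T c dM, T c dM⟫ : ℂ) = 0 := by
    have h4 : energyInner c (wM : V → ℂ) (dM : V → ℂ)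
        - energyInner c (vM : V → ℂ) (dM : V → ℂ) = 0 := by
      rw [← e3, ← e1, ← e2, sub_self]
    rw [energyInner_eq c hnonneg wM dM, energyInner_eq c hnonneg vM dM] at h4
    have h6 : (⟪T c wM, T c dM⟫ : ℂ) - ⟪T c vM, T c dM⟫ = 0 := by
      linear_combination 2 * h4
    have h7 : T c dM = T c wM - T c vM := by rw [hdM, map_sub]
    nth_rewrite 1 [h7]
    rw [inner_sub_left, h6]
  have hTd : T c dM = 0 := by
    exact inner_self_eq_zero.1 hzero
  have hDd : ∀ p : V × V, Dm c (dM : V → ℂ) p = 0 := by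
    intro p
    rw [← T_apply c dM p, hTd]
    rfl
  refine ⟨(dM : V → ℂ) o, fun z => ?_⟩
  have hconst : (dM : V → ℂ) z = (dM : V → ℂ) o :=
    const_of_Dzero c hnonneg hconn (dM : V → ℂ) hDd z o
  have hdz : (dM : V → ℂ) z = w z - (vM : V → ℂ) z := by
    rw [hdM]
    simp only [Submodule.coe_sub, Pi.sub_apply]
    rfl
  have hdo : (dM : V → ℂ) o = w o - (vM : V → ℂ) o := by
    rw [hdM]
    simp only [Submodule.coe_sub, Pi.sub_apply]
    rfl
  rw [← hdo] at *
  have := hdz.symm.trans hconst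
  linear_combination this


end Network
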